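/- If a single point x ∈ X is identified with the Dirac measure δ_x, then for the induced system on Borel probability measures, a non-autonomous system (X, f_{1,∞}) with the strong specification property induces a system (ℳ(X), f̃_{1,∞}) that also has the strong specification property. -/

import Mathlib

open Metric TopologicalSpace MeasureTheory

/-- `nIter f n = f_n ∘ ⋯ ∘ f_1` (with `f (i)` playing the role of `f_{i+1}`), `nIter f 0 = id`. -/
def nIter {X : Type*} (f : ℕ → X → X) : ℕ → X → X
  | 0 => id
  | n + 1 => f n ∘ nIter f n

/-- Strong specification property for a non-autonomous system. -/
def SSP {X : Type*} [MetricSpace X] (f : ℕ → X → X) : Prop :=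
  ∀ ε : ℝ, ε > 0 → ∃ M : ℕ, ∀ k : ℕ, 1 ≤ k → ∀ (x : ℕ → X) (a b : ℕ → ℕ),
    (∀ i, i < k → a i ≤ b i) →
    (∀ i, i + 1 < k → b i < a (i + 1) ∧ M < a (i + 1) - b i) →
    ∀ p : ℕ, M + b (k - 1) - a 0 < p →
      ∃ z : X, (∀ m : ℕ, nIter f (p * m) z = z) ∧
        ∀ i, i < k → ∀ j, a i ≤ j → j ≤ b i →
          dist (nIter f j z) (nIter f j (x i)) < ε

/-- Weak specification property for a non-autonomous system. -/
def WSP {X : Type*} [MetricSpace X] (f : ℕ → X → X) : Prop :=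
  ∀ ε : ℝ, ε > 0 → ∃ N : ℕ, ∀ s : ℕ, 1 ≤ s → ∀ (x : ℕ → X) (a b : ℕ → ℕ),
    (∀ i, i < s → a i ≤ b i) →
    (∀ i, i + 1 < s → b i < a (i + 1) ∧ N < a (i + 1) - b i) →
      ∃ z : X, ∀ i, i < s → ∀ j, a i ≤ j → j ≤ b i →
        dist (nIter f j z) (nIter f j (x i)) < ε

/-- Quasi-weak specification property for a non-autonomous system. -/
def QSP {X : Type*} [MetricSpace X] (f : ℕ → X → X) : Prop :=
  ∀ ε : ℝ, ε > 0 → ∃ M : ℕ, ∀ x₁ x₂ : X, ∀ n : ℕ, M ≤ n →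
    ∃ z : X, dist z x₁ < ε ∧ dist (nIter f n z) (nIter f n x₂) < ε

/-- Topological mixing for a non-autonomous system. -/
def TopMixing {X : Type*} [TopologicalSpace X] (f : ℕ → X → X) : Prop :=
  ∀ U V : Set X, IsOpen U → IsOpen V → U.Nonempty → V.Nonempty →
    ∃ N : ℕ, ∀ n : ℕ, N ≤ n → (nIter f n '' U ∩ V).Nonempty

/-- Topological transitivity for a non-autonomous system. -/
def TopTransitive {X : Type*} [TopologicalSpace X] (f : ℕ → X → X) : Prop :=
  ∀ U V : Set X, IsOpen U → IsOpen V → U.Nonempty → V.Nonempty →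
    ∃ n : ℕ, 1 ≤ n ∧ (nIter f n '' U ∩ V).Nonempty

/-- Sensitive dependence on initial conditions for a non-autonomous system. -/
def Sensitive {X : Type*} [MetricSpace X] (f : ℕ → X → X) : Prop :=
  ∃ δ : ℝ, δ > 0 ∧ ∀ x : X, ∀ U : Set X, IsOpen U → x ∈ U →
    ∃ y ∈ U, ∃ n : ℕ, 1 ≤ n ∧ δ < dist (nIter f n x) (nIter f n y)


section Aux
open Finset
open scoped ENNReal
set_option linter.unusedSectionVars false
set_option maxHeartbeats 1000000

variable {X : Type*} [MetricSpace X] [CompactSpace X] [MeasurableSpace X] [BorelSpace X]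

noncomputable def emp (x : ℕ → X) (n : ℕ) : Measure X :=
  (n : ℝ≥0∞)⁻¹ • ∑ l ∈ Finset.range n, MeasureTheory.Measure.dirac (x l)

lemma emp_apply (x : ℕ → X) (n : ℕ) {B : Set X} (hB : MeasurableSet B) [DecidablePred (· ∈ B)] :
    emp x n B = (((Finset.range n).filter (fun l => x l ∈ B)).card : ℝ≥0∞) / n := by
  simp only [emp, Measure.smul_apply, Measure.finset_sum_apply, smul_eq_mul]
  rw [ENNReal.div_eq_inv_mul]
  congr 1
  rw [← Finset.sum_boole]
  refine Finset.sum_congr rfl fun l _ => ?_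
  rw [Measure.dirac_apply' _ hB, Set.indicator_apply]
  simp

lemma emp_isProb (x : ℕ → X) {n : ℕ} (hn : n ≠ 0) : IsProbabilityMeasure (emp x n) := by
  classical
  constructor
  rw [emp_apply _ _ MeasurableSet.univ]
  simp [Finset.filter_true_of_mem, ENNReal.div_self, hn]

lemma emp_map (x : ℕ → X) (n : ℕ) {g : X → X} (hg : Measurable g) :
    (emp x n).map g = emp (g ∘ x) n := by
  classical
  refine Measure.ext fun B hB => ?_
  rw [Measure.map_apply hg hB, emp_apply _ _ (hg hB), emp_apply _ _ hB]
  rfl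

lemma emp_dist_le {x y : ℕ → X} {n : ℕ} (hn : n ≠ 0) {δ : ℝ} (hδ : 0 < δ)
    (hxy : ∀ l, dist (x l) (y l) < δ) :
    levyProkhorovDist (emp x n) (emp y n) ≤ δ := by
  classical
  haveI := emp_isProb x hn
  haveI := emp_isProb y hn
  refine levyProkhorovDist_le_of_forall_le _ _ hδ.le fun ε B hε hB => ?_
  have key : emp x n B ≤ emp y n (thickening ε B) := by
    rw [emp_apply _ _ hB, emp_apply _ _ isOpen_thickening.measurableSet]
    refine ENNReal.div_le_div_right ?_ _
    refine Nat.cast_le.mpr <| Finset.card_le_card <| fun l hl => ?_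
    simp only [Finset.mem_filter] at hl ⊢
    refine ⟨hl.1, ?_⟩
    rw [mem_thickening_iff]
    exact ⟨x l, hl.2, lt_trans (by rw [dist_comm]; exact hxy l) hε⟩
  exact key.trans le_self_add

lemma emp_dense (μ : Measure X) [IsProbabilityMeasure μ] {δ : ℝ} (hδ : 0 < δ) :
    ∃ n₀ : ℕ, 1 ≤ n₀ ∧ ∀ n, n₀ ≤ n → ∃ x : ℕ → X, levyProkhorovDist (emp x n) μ ≤ δ := by
  classical
  have hne : Nonempty X := by
    by_contra hemp
    rw [not_nonempty_iff] at hemp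
    have h1 : μ Set.univ = 1 := measure_univ
    rw [Set.univ_eq_empty_iff.mpr hemp, measure_empty] at h1
    exact zero_ne_one h1
  have hδ3 : 0 < δ / 3 := by linarith
  -- finite cover by balls of radius δ/3
  obtain ⟨t, -, htfin, htcover⟩ :=
    finite_cover_balls_of_compact (isCompact_univ (X := X)) hδ3
  -- enumerate the centers
  set tf : Finset X := htfin.toFinset with htf
  set r : ℕ := tf.card with hr
  set y : ℕ → X := fun s => if h : s < r then (tf.equivFin.symm ⟨s, h⟩ : X) else Classical.arbitrary X
    with hy
  have hcov : ∀ q : X, ∃ s, s < r ∧ q ∈ ball (y s) (δ/3) := by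
    intro q
    have hq := htcover (Set.mem_univ q)
    simp only [Set.mem_iUnion] at hq
    obtain ⟨c, hc, hqc⟩ := hq
    have hc' : c ∈ tf := htfin.mem_toFinset.mpr hc
    refine ⟨(tf.equivFin ⟨c, hc'⟩ : Fin r), (tf.equivFin ⟨c, hc'⟩).2, ?_⟩
    have hlt : ((tf.equivFin ⟨c, hc'⟩ : Fin tf.card) : ℕ) < r := (tf.equivFin ⟨c, hc'⟩).isLt
    have : y ((tf.equivFin ⟨c, hc'⟩ : Fin tf.card) : ℕ) = c := by
      rw [hy]
      simp [hlt]
    rwa [this]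
  have hrpos : 0 < r := by
    obtain ⟨s, hs, -⟩ := hcov (Classical.arbitrary X)
    exact lt_of_le_of_lt (Nat.zero_le s) hs
  -- disjointified pieces
  set A : ℕ → Set X := fun s => ball (y s) (δ/3) \ ⋃ (s' : ℕ) (_ : s' < s), ball (y s') (δ/3)
    with hA
  have hAmeas : ∀ s, MeasurableSet (A s) := fun s =>
    measurableSet_ball.diff (MeasurableSet.iUnion fun s' =>
      MeasurableSet.iUnion fun _ => measurableSet_ball)
  have hAsub : ∀ s, A s ⊆ ball (y s) (δ/3) := fun s => Set.diff_subset
  have hAdisj : ∀ {s s' : ℕ}, s < s' → Disjoint (A s) (A s') := by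
    intro s s' hss'
    rw [Set.disjoint_left]
    intro q hqs hqs'
    exact hqs'.2 (Set.mem_iUnion.mpr ⟨s, Set.mem_iUnion.mpr ⟨hss', hqs.1⟩⟩)
  have hAcover : ∀ q : X, ∃ s, s < r ∧ q ∈ A s := by
    intro q
    obtain ⟨s₁, hs₁r, hs₁⟩ := hcov q
    have hP : ∃ s, q ∈ ball (y s) (δ/3) := ⟨s₁, hs₁⟩
    refine ⟨Nat.find hP, lt_of_le_of_lt (Nat.find_min' hP hs₁) hs₁r, Nat.find_spec hP, ?_⟩
    intro hmem
    simp only [Set.mem_iUnion] at hmem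
    obtain ⟨s', hs', hmem⟩ := hmem
    exact Nat.find_min hP hs' hmem
  -- weights and cdf
  set w : ℕ → ℝ := fun s => (μ (A s)).toReal with hw
  have hw0 : ∀ s, 0 ≤ w s := fun s => ENNReal.toReal_nonneg
  have hUnionEq : ⋃ s ∈ Finset.range r, A s = Set.univ := by
    refine Set.eq_univ_of_forall fun q => ?_
    obtain ⟨s, hsr, hq⟩ := hAcover q
    exact Set.mem_biUnion (Finset.mem_range.mpr hsr) hq
  have hpd : ∀ (S : Finset ℕ), (S : Set ℕ).PairwiseDisjoint A := by
    intro S s _ s' _ hss'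
    rcases lt_or_gt_of_ne hss' with h | h
    · exact hAdisj h
    · exact (hAdisj h).symm
  have hsumS : ∀ S : Finset ℕ, ∑ s ∈ S, w s = (μ (⋃ s ∈ S, A s)).toReal := by
    intro S
    rw [measure_biUnion_finset (hpd S) (fun s _ => hAmeas s)]
    rw [ENNReal.toReal_sum (fun s _ => measure_ne_top μ (A s))]
  have hwsum : ∑ s ∈ Finset.range r, w s = 1 := by
    rw [hsumS, hUnionEq, measure_univ, ENNReal.toReal_one]
  set F : ℕ → ℝ := fun s => ∑ s' ∈ Finset.range s, w s' with hF
  have hFmono : Monotone F := fun s s' hss' =>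
    Finset.sum_le_sum_of_subset_of_nonneg (Finset.range_subset_range.mpr hss')
      (fun s'' _ _ => hw0 s'')
  have hF0 : F 0 = 0 := by simp [hF]
  have hFr : F r = 1 := hwsum
  have hFstep : ∀ s, F (s + 1) = F s + w s := fun s => Finset.sum_range_succ w s
  -- representative points
  set pt : ℕ → X := fun s => if h : (A s).Nonempty then h.choose else y s with hpt
  have hptmem : ∀ s, (A s).Nonempty → pt s ∈ A s := by
    intro s hs
    rw [hpt]
    simp only [dif_pos hs]
    exact hs.choose_spec
  -- choice of n₀
  refine ⟨max 1 ⌈(r : ℝ) / δ⌉₊, le_max_left _ _, fun n hn => ?_⟩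
  have hn1 : 1 ≤ n := le_trans (le_max_left _ _) hn
  have hn0 : (0 : ℝ) < n := by exact_mod_cast hn1
  have hrn : (r : ℝ) ≤ n * δ := by
    have h1 : ((r : ℝ) / δ) ≤ (⌈(r : ℝ) / δ⌉₊ : ℝ) := Nat.le_ceil _
    have h2 : (⌈(r : ℝ) / δ⌉₊ : ℝ) ≤ n := by
      exact_mod_cast le_trans (le_max_right _ _) hn
    calc (r : ℝ) = ((r : ℝ) / δ) * δ := by field_simp
    _ ≤ (n : ℝ) * δ := by nlinarith
  -- the cdf-inverse indices
  set c : ℕ → ℕ := fun s => ⌈(n : ℝ) * F s⌉₊ with hc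
  have hcmono : Monotone c := fun s s' hss' =>
    Nat.ceil_le_ceil (mul_le_mul_of_nonneg_left (hFmono hss') hn0.le)
  have hc0 : c 0 = 0 := by simp [hc, hF0]
  have hcr : c r = n := by simp [hc, hFr]
  set sIdx : ℕ → ℕ := fun l => Nat.findGreatest (fun s => c s ≤ l) r with hsIdx
  set x : ℕ → X := fun l => pt (sIdx l) with hx
  have hsIdx_lt : ∀ l, l < n → sIdx l < r := by
    intro l hl
    by_contra hcon
    push_neg at hcon
    have heq : Nat.findGreatest (fun s => c s ≤ l) r = r :=
      le_antisymm (Nat.findGreatest_le (P := fun s => c s ≤ l) r) (by simpa [hsIdx] using hcon)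
    have h2 : c r ≤ l := (Nat.findGreatest_eq_iff.mp heq).2.1 hrpos.ne'
    rw [hcr] at h2
    omega
  have hs1 : ∀ l, c (sIdx l) ≤ l := by
    intro l
    exact Nat.findGreatest_spec (P := fun s => c s ≤ l) (Nat.zero_le r) (by simp [hc0])
  have hs2 : ∀ l, l < n → l < c (sIdx l + 1) := by
    intro l hl
    have h := Nat.findGreatest_is_greatest (P := fun s => c s ≤ l)
      (by simpa [hsIdx] using Nat.lt_succ_self (sIdx l)) (hsIdx_lt l hl)
    simp only [Nat.succ_eq_add_one] at h
    omega
  -- bound on fiber cardinalities in ℝ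
  have hfiber : ∀ s, (((Finset.range n).filter (fun l => sIdx l = s)).card : ℝ) ≤ n * w s + 1 := by
    intro s
    have hsub : (Finset.range n).filter (fun l => sIdx l = s) ⊆ Finset.Ico (c s) (c (s + 1)) := by
      intro l hl
      simp only [Finset.mem_filter, Finset.mem_range] at hl
      rw [Finset.mem_Ico]
      exact ⟨hl.2 ▸ hs1 l, hl.2 ▸ hs2 l hl.1⟩
    have h1 : (((Finset.range n).filter (fun l => sIdx l = s)).card : ℝ) ≤
        ((Finset.Ico (c s) (c (s + 1))).card : ℝ) := by
      exact_mod_cast Finset.card_le_card hsub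
    rw [Nat.card_Ico] at h1
    have h2 : ((c (s + 1) - c s : ℕ) : ℝ) ≤ n * w s + 1 := by
      rw [Nat.cast_sub (hcmono (Nat.le_succ s))]
      have h3 : (c (s + 1) : ℝ) < (n : ℝ) * F (s + 1) + 1 :=
        Nat.ceil_lt_add_one (by positivity)
      have h4 : (n : ℝ) * F s ≤ (c s : ℝ) := Nat.le_ceil _
      have h5 := hFstep s
      nlinarith
    linarith
  refine ⟨x, ?_⟩
  -- main LP bound
  haveI := emp_isProb x (by omega : n ≠ 0)
  refine levyProkhorovDist_le_of_forall_le _ _ hδ.le fun ε B hε hB => ?_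
  set T := thickening ε B with hT
  -- count bound
  set S : Finset ℕ := (Finset.range r).filter (fun s => pt s ∈ B) with hS
  have hATsub : ∀ s ∈ S, A s ⊆ T := by
    intro s hs q hq
    have hptB : pt s ∈ B := (Finset.mem_filter.mp hs).2
    have hptA : pt s ∈ A s := hptmem s ⟨q, hq⟩
    rw [hT, mem_thickening_iff]
    refine ⟨pt s, hptB, ?_⟩
    have h1 : dist q (y s) < δ/3 := hAsub s hq
    have h2 : dist (pt s) (y s) < δ/3 := hAsub s hptA
    have := dist_triangle q (y s) (pt s)
    rw [dist_comm (y s) (pt s)] at this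
    linarith
  have hcount : (((Finset.range n).filter (fun l => x l ∈ B)).card : ℝ) ≤
      n * (μ T).toReal + n * ε := by
    have hcard : ((Finset.range n).filter (fun l => x l ∈ B)).card =
        ∑ s ∈ Finset.range r,
          (((Finset.range n).filter (fun l => x l ∈ B)).filter (fun l => sIdx l = s)).card := by
      refine Finset.card_eq_sum_card_fiberwise fun l hl => ?_
      simp only [Finset.mem_coe, Finset.mem_filter, Finset.mem_range] at hl
      exact Finset.mem_range.mpr (hsIdx_lt l hl.1)
    have hterm : ∀ s ∈ Finset.range r,
        ((((Finset.range n).filter (fun l => x l ∈ B)).filter (fun l => sIdx l = s)).card : ℝ) ≤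
          if pt s ∈ B then n * w s + 1 else 0 := by
      intro s _
      by_cases hptB : pt s ∈ B
      · rw [if_pos hptB]
        refine le_trans ?_ (hfiber s)
        have : (((Finset.range n).filter (fun l => x l ∈ B)).filter (fun l => sIdx l = s)) ⊆
            ((Finset.range n).filter (fun l => sIdx l = s)) := by
          intro l hl
          simp only [Finset.mem_filter] at hl ⊢
          exact ⟨hl.1.1, hl.2⟩
        exact_mod_cast Finset.card_le_card this
      · rw [if_neg hptB]
        have : (((Finset.range n).filter (fun l => x l ∈ B)).filter (fun l => sIdx l = s)) = ∅ := by
          rw [Finset.eq_empty_iff_forall_notMem]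
          intro l hl
          simp only [Finset.mem_filter] at hl
          exact hptB (by rw [← hl.2]; exact hl.1.2)
        simp [this]
    have h1 : (((Finset.range n).filter (fun l => x l ∈ B)).card : ℝ) ≤
        ∑ s ∈ Finset.range r, if pt s ∈ B then n * w s + 1 else 0 := by
      rw [hcard]
      push_cast
      exact Finset.sum_le_sum hterm
    have h2 : ∑ s ∈ Finset.range r, (if pt s ∈ B then (n : ℝ) * w s + 1 else 0) =
        ∑ s ∈ S, ((n : ℝ) * w s + 1) := by
      rw [hS, Finset.sum_filter]
    have h3 : ∑ s ∈ S, ((n : ℝ) * w s + 1) = (n : ℝ) * (∑ s ∈ S, w s) + S.card := by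
      rw [Finset.sum_add_distrib, ← Finset.mul_sum, Finset.sum_const, nsmul_eq_mul, mul_one]
    have h4 : ∑ s ∈ S, w s ≤ (μ T).toReal := by
      rw [hsumS]
      refine ENNReal.toReal_mono (measure_ne_top μ T) (measure_mono ?_)
      exact Set.iUnion₂_subset hATsub
    have h5 : (S.card : ℝ) ≤ r := by
      have := Finset.card_le_card (Finset.filter_subset (fun s => pt s ∈ B) (Finset.range r))
      rw [Finset.card_range] at this
      exact_mod_cast this
    have h6 : (r : ℝ) ≤ n * ε := le_trans hrn (by nlinarith)
    calc (((Finset.range n).filter (fun l => x l ∈ B)).card : ℝ)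
        ≤ ∑ s ∈ S, ((n : ℝ) * w s + 1) := by rw [← h2]; exact h1
      _ = (n : ℝ) * (∑ s ∈ S, w s) + S.card := h3
      _ ≤ n * (μ T).toReal + n * ε := by nlinarith
  -- convert to ℝ≥0∞
  rw [emp_apply _ _ hB]
  have hLne : ((((Finset.range n).filter (fun l => x l ∈ B)).card : ℝ≥0∞) / n) ≠ ∞ := by
    exact (ENNReal.div_lt_top (by simp) (by exact_mod_cast (by omega : n ≠ 0))).ne
  have hRne : μ T + ENNReal.ofReal ε ≠ ∞ :=
    ENNReal.add_ne_top.mpr ⟨measure_ne_top μ T, ENNReal.ofReal_ne_top⟩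
  rw [← ENNReal.toReal_le_toReal hLne hRne]
  rw [ENNReal.toReal_div, ENNReal.toReal_add (measure_ne_top μ T) ENNReal.ofReal_ne_top,
    ENNReal.toReal_ofReal (le_of_lt (lt_trans hδ hε)), ENNReal.toReal_natCast,
    ENNReal.toReal_natCast]
  rw [div_le_iff₀ hn0]
  calc (((Finset.range n).filter (fun l => x l ∈ B)).card : ℝ)
      ≤ n * (μ T).toReal + n * ε := hcount
    _ = ((μ T).toReal + ε) * n := by ring

lemma nIter_continuous (f : ℕ → X → X) (hc : ∀ n, Continuous (f n)) (j : ℕ) :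
    Continuous (nIter f j) := by
  induction j with
  | zero => exact continuous_id
  | succ j ih => exact (hc j).comp ih

lemma nIter_induced (f : ℕ → X → X) (hc : ∀ n, Continuous (f n)) (j : ℕ)
    (ν : LevyProkhorov (ProbabilityMeasure X)) :
    (nIter (fun n (μ : LevyProkhorov (ProbabilityMeasure X)) =>
      (LevyProkhorov.toMeasureEquiv (α := ProbabilityMeasure X)).symm
        (((LevyProkhorov.toMeasureEquiv (α := ProbabilityMeasure X)) μ).map
          (hc n).measurable.aemeasurable)) j ν).toMeasure.toMeasure
      = Measure.map (nIter f j) ν.toMeasure.toMeasure := by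
  induction j with
  | zero =>
      rw [show nIter f 0 = id from rfl, Measure.map_id]
      rfl
  | succ j ih =>
      show ((((LevyProkhorov.toMeasureEquiv (α := ProbabilityMeasure X)) (nIter _ j ν)).map
        (hc j).measurable.aemeasurable) : ProbabilityMeasure X).toMeasure = _
      rw [ProbabilityMeasure.toMeasure_map]
      have : ((LevyProkhorov.toMeasureEquiv (α := ProbabilityMeasure X)) (nIter _ j ν)).toMeasure
          = Measure.map (nIter f j) ν.toMeasure.toMeasure := ih
      rw [this, Measure.map_map (hc j).measurable (nIter_continuous f hc j).measurable]
      rfl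

lemma induced_continuous (f : ℕ → X → X) (hc : ∀ n, Continuous (f n)) (m : ℕ) :
    Continuous (fun (μ : LevyProkhorov (ProbabilityMeasure X)) =>
      (LevyProkhorov.toMeasureEquiv (α := ProbabilityMeasure X)).symm
        (((LevyProkhorov.toMeasureEquiv (α := ProbabilityMeasure X)) μ).map
          (hc m).measurable.aemeasurable)) :=
  LevyProkhorov.continuous_ofMeasure_probabilityMeasure.comp
    ((ProbabilityMeasure.continuous_map (hc m)).comp
      LevyProkhorov.continuous_toMeasure_probabilityMeasure)

lemma nIter_induced_continuous (f : ℕ → X → X) (hc : ∀ n, Continuous (f n)) (j : ℕ) :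
    Continuous (nIter (fun n (μ : LevyProkhorov (ProbabilityMeasure X)) =>
      (LevyProkhorov.toMeasureEquiv (α := ProbabilityMeasure X)).symm
        (((LevyProkhorov.toMeasureEquiv (α := ProbabilityMeasure X)) μ).map
          (hc n).measurable.aemeasurable)) j) := by
  induction j with
  | zero => exact continuous_id
  | succ j ih => exact (induced_continuous f hc j).comp ih

end Aux

set_option maxHeartbeats 1000000 in
theorem stmt11 {X : Type*} [MetricSpace X] [CompactSpace X] [MeasurableSpace X] [BorelSpace X]
    (f : ℕ → X → X) (hc : ∀ n, Continuous (f n)) (hs : ∀ n, Function.Surjective (f n))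
    (h : SSP f) :
    SSP (fun n (μ : LevyProkhorov (ProbabilityMeasure X)) =>
      (LevyProkhorov.toMeasureEquiv (α := ProbabilityMeasure X)).symm
        (((LevyProkhorov.toMeasureEquiv (α := ProbabilityMeasure X)) μ).map
          (hc n).measurable.aemeasurable)) := by
  classical
  intro ε hε
  have hε2 : 0 < ε / 2 := by linarith
  obtain ⟨M, hM⟩ := h (ε/2) hε2
  refine ⟨M, ?_⟩
  intro k hk μ a b hab hgap p hp
  have hne : Nonempty X := by
    by_contra hemp
    rw [not_nonempty_iff] at hemp
    have h1 : ((LevyProkhorov.toMeasureEquiv (α := ProbabilityMeasure X)) (μ 0)).toMeasure Set.univ = 1 :=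
      measure_univ
    rw [Set.univ_eq_empty_iff.mpr hemp, measure_empty] at h1
    exact zero_ne_one h1
  -- notation for the induced system
  set Find : ℕ → LevyProkhorov (ProbabilityMeasure X) → LevyProkhorov (ProbabilityMeasure X) :=
    fun n (μ : LevyProkhorov (ProbabilityMeasure X)) =>
      (LevyProkhorov.toMeasureEquiv (α := ProbabilityMeasure X)).symm
        (((LevyProkhorov.toMeasureEquiv (α := ProbabilityMeasure X)) μ).map
          (hc n).measurable.aemeasurable) with hFind
  have hLPeq : ∀ (α β : LevyProkhorov (ProbabilityMeasure X)),
      α.toMeasure.toMeasure = β.toMeasure.toMeasure → α = β := fun α β hab =>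
    LevyProkhorov.toMeasure_injective (ProbabilityMeasure.toMeasure_injective hab)
  -- step 1 : per-block approximation by empirical measures
  have key1 : ∀ i : ℕ, ∃ n₀ : ℕ, 1 ≤ n₀ ∧ ∀ n, n₀ ≤ n → ∃ x : ℕ → X,
      ∀ j, a i ≤ j → j ≤ b i →
        levyProkhorovDist (Measure.map (nIter f j) (emp x n))
          (Measure.map (nIter f j) ((LevyProkhorov.toMeasureEquiv (α := ProbabilityMeasure X)) (μ i)).toMeasure)
          < ε/2 := by
    intro i
    set U : Set (LevyProkhorov (ProbabilityMeasure X)) :=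
      ⋂ j ∈ Finset.Icc (a i) (b i),
        (nIter Find j) ⁻¹' (ball (nIter Find j (μ i)) (ε/2)) with hU
    have hUopen : IsOpen U :=
      isOpen_biInter_finset fun j _ =>
        (isOpen_ball).preimage (nIter_induced_continuous f hc j)
    have hUmem : μ i ∈ U := by
      rw [hU]
      simp only [Set.mem_iInter, Set.mem_preimage, mem_ball]
      intro j _
      rw [dist_self]
      exact hε2
    obtain ⟨δi, hδi, hballsub⟩ := Metric.isOpen_iff.mp hUopen (μ i) hUmem
    have hδi2 : 0 < δi / 2 := by linarith
    obtain ⟨n₀, hn₀1, hdense⟩ :=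
      emp_dense (X := X) ((LevyProkhorov.toMeasureEquiv (α := ProbabilityMeasure X)) (μ i)).toMeasure hδi2
    refine ⟨n₀, hn₀1, fun n hn => ?_⟩
    obtain ⟨x, hx⟩ := hdense n hn
    haveI hprob := emp_isProb x (show n ≠ 0 by omega)
    set ν : LevyProkhorov (ProbabilityMeasure X) :=
      (LevyProkhorov.toMeasureEquiv (α := ProbabilityMeasure X)).symm ⟨emp x n, hprob⟩ with hν
    have hmemball : ν ∈ ball (μ i) δi := by
      rw [mem_ball, LevyProkhorov.dist_probabilityMeasure_def]
      have : ν.toMeasure.toMeasure = emp x n := rfl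
      rw [this]
      exact lt_of_le_of_lt hx (by linarith)
    have hUν := hballsub hmemball
    rw [hU] at hUν
    simp only [Set.mem_iInter, Set.mem_preimage, mem_ball] at hUν
    refine ⟨x, fun j hj1 hj2 => ?_⟩
    have hj : j ∈ Finset.Icc (a i) (b i) := Finset.mem_Icc.mpr ⟨hj1, hj2⟩
    have hd := hUν j hj
    rw [LevyProkhorov.dist_probabilityMeasure_def, nIter_induced f hc j ν, nIter_induced f hc j (μ i)] at hd
    have hν' : ν.toMeasure.toMeasure = emp x n := rfl
    rwa [hν'] at hd
  choose N₀ hN₀1 hN₀ using key1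
  -- common size n
  set n : ℕ := max 1 ((Finset.range k).sup N₀) with hn
  have hn1 : 1 ≤ n := le_max_left _ _
  have hnge : ∀ i, i < k → N₀ i ≤ n := fun i hik =>
    le_trans (Finset.le_sup (Finset.mem_range.mpr hik)) (le_max_right _ _)
  have key2 : ∀ i : ℕ, ∃ x : ℕ → X, i < k → ∀ j, a i ≤ j → j ≤ b i →
      levyProkhorovDist (Measure.map (nIter f j) (emp x n))
        (Measure.map (nIter f j) ((LevyProkhorov.toMeasureEquiv (α := ProbabilityMeasure X)) (μ i)).toMeasure)
        < ε/2 := by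
    intro i
    by_cases hik : i < k
    · obtain ⟨x, hx⟩ := hN₀ i n (hnge i hik)
      exact ⟨x, fun _ => hx⟩
    · exact ⟨fun _ => Classical.arbitrary X, fun hik' => absurd hik' hik⟩
  choose xs hxs using key2
  -- step 2 : specification in the base system, atom by atom
  have hzex : ∀ l : ℕ, ∃ z : X, (∀ m : ℕ, nIter f (p * m) z = z) ∧
      ∀ i, i < k → ∀ j, a i ≤ j → j ≤ b i →
        dist (nIter f j z) (nIter f j (xs i l)) < ε/2 :=
    fun l => hM k hk (fun i => xs i l) a b hab hgap p hp
  choose z hz1 hz2 using hzex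
  haveI hzprob := emp_isProb z (show n ≠ 0 by omega)
  refine ⟨(LevyProkhorov.toMeasureEquiv (α := ProbabilityMeasure X)).symm ⟨emp z n, hzprob⟩, ?_, ?_⟩
  · -- periodicity
    intro m
    apply hLPeq
    rw [nIter_induced f hc]
    have htoM : ((LevyProkhorov.toMeasureEquiv (α := ProbabilityMeasure X)).symm
        (⟨emp z n, hzprob⟩ : ProbabilityMeasure X)).toMeasure.toMeasure = emp z n := rfl
    rw [htoM, emp_map z n (nIter_continuous f hc (p*m)).measurable]
    have : (nIter f (p*m)) ∘ z = z := funext fun l => hz1 l m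
    rw [this]
  · -- shadowing
    intro i hik j hj1 hj2
    rw [LevyProkhorov.dist_probabilityMeasure_def, nIter_induced f hc, nIter_induced f hc]
    have htoM : ((LevyProkhorov.toMeasureEquiv (α := ProbabilityMeasure X)).symm
        (⟨emp z n, hzprob⟩ : ProbabilityMeasure X)).toMeasure.toMeasure = emp z n := rfl
    rw [htoM]
    have hmeas : Measurable (nIter f j) := (nIter_continuous f hc j).measurable
    haveI i1 : IsProbabilityMeasure (Measure.map (nIter f j) (emp z n)) :=
      Measure.isProbabilityMeasure_map hmeas.aemeasurable
    haveI i2 : IsProbabilityMeasure (Measure.map (nIter f j) (emp (xs i) n)) := by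
      haveI := emp_isProb (xs i) (show n ≠ 0 by omega)
      exact Measure.isProbabilityMeasure_map hmeas.aemeasurable
    haveI i3 : IsProbabilityMeasure (Measure.map (nIter f j)
        ((LevyProkhorov.toMeasureEquiv (α := ProbabilityMeasure X)) (μ i)).toMeasure) :=
      Measure.isProbabilityMeasure_map hmeas.aemeasurable
    have h1 : levyProkhorovDist (Measure.map (nIter f j) (emp z n))
        (Measure.map (nIter f j) (emp (xs i) n)) ≤ ε/2 := by
      rw [emp_map z n hmeas, emp_map (xs i) n hmeas]
      exact emp_dist_le (show n ≠ 0 by omega) hε2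
        (fun l => hz2 l i hik j hj1 hj2)
    have h2 := hxs i hik j hj1 hj2
    have hcoe : (μ i).toMeasure.toMeasure
        = ((LevyProkhorov.toMeasureEquiv (α := ProbabilityMeasure X)) (μ i)).toMeasure := rfl
    rw [hcoe]
    have htri := levyProkhorovDist_triangle (Measure.map (nIter f j) (emp z n))
      (Measure.map (nIter f j) (emp (xs i) n))
      (Measure.map (nIter f j) ((LevyProkhorov.toMeasureEquiv (α := ProbabilityMeasure X)) (μ i)).toMeasure)
    linarith
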